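/- Let 1 < n < ω and let (X, T) be an n-resolvable space having a nonempty subspace A such that (A, T) is ω-resolvable. Then there is a topology U ⊇ T on X such that (X, U) is exactly n-resolvable. -/

import Mathlib

open Set TopologicalSpace

variable {X : Type*}

/-- The family `D : ι → Set X` witnesses `ι`-resolvability of the subspace `S` of `(X, T)`:
the `D i` are pairwise disjoint nonempty subsets of `S`, each dense in the subspace `S`
(equivalently `S ⊆ closure (D i)`). -/
def ResolvableFam (T : TopologicalSpace X) (S : Set X) (ι : Type*) : Prop :=
  ∃ D : ι → Set X, (∀ i, D i ⊆ S) ∧ (∀ i, (D i).Nonempty) ∧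
    (∀ i, S ⊆ @closure X T (D i)) ∧ (Pairwise fun i j => Disjoint (D i) (D j))

/-- A topology is quasi-regular if every nonempty open set contains the closure
of some nonempty open set. -/
def QuasiRegular (T : TopologicalSpace X) : Prop :=
  ∀ U : Set X, T.IsOpen U → U.Nonempty →
    ∃ V : Set X, T.IsOpen V ∧ V.Nonempty ∧ @closure X T V ⊆ U

/-- In a topology generated by a family closed under binary intersections and containing
`univ`, every point of an open set lies in a basic (generating) set inside the open set. -/
private lemma genOpen_basis {B : Set (Set X)} (hu : univ ∈ B)
    (hi : ∀ a ∈ B, ∀ b ∈ B, a ∩ b ∈ B) :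
    ∀ W, TopologicalSpace.GenerateOpen B W → ∀ x ∈ W, ∃ b ∈ B, x ∈ b ∧ b ⊆ W := by
  intro W hW
  induction hW with
  | basic s hs => exact fun x hx => ⟨s, hs, hx, subset_rfl⟩
  | univ => exact fun x _ => ⟨univ, hu, trivial, subset_rfl⟩
  | inter s t _ _ ihs iht =>
      intro x hx
      obtain ⟨b1, hb1, hxb1, hb1s⟩ := ihs x hx.1
      obtain ⟨b2, hb2, hxb2, hb2s⟩ := iht x hx.2
      exact ⟨b1 ∩ b2, hi _ hb1 _ hb2, ⟨hxb1, hxb2⟩,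
        fun y hy => ⟨hb1s hy.1, hb2s hy.2⟩⟩
  | sUnion S _ ih =>
      intro x hx
      obtain ⟨u, huS, hxu⟩ := hx
      obtain ⟨b, hb, hxb, hbu⟩ := ih u huS x hxu
      exact ⟨b, hb, hxb, hbu.trans (subset_sUnion_of_mem huS)⟩

/-- Density of a set w.r.t. an explicit topology, in "meets every nonempty open set" form. -/
private def DenseIn (U : TopologicalSpace X) (F : Set X) : Prop :=
  ∀ W : Set X, U.IsOpen W → W.Nonempty → (F ∩ W).Nonempty

private lemma denseIn_iff_closure {U : TopologicalSpace X} {F : Set X} :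
    DenseIn U F ↔ univ ⊆ @closure X U F := by
  letI := U
  rw [show (univ ⊆ closure F) ↔ Dense F from ⟨fun h x => h trivial, fun h x _ => h x⟩,
     dense_iff_inter_open]
  exact ⟨fun h W hW hne => (h W hW hne).imp fun x hx => ⟨hx.2, hx.1⟩,
         fun h W hW hne => (h W hW hne).imp fun x hx => ⟨hx.2, hx.1⟩⟩

theorem stmt7 [T : TopologicalSpace X] (n : ℕ) (hn : 1 < n)
    (hres : ResolvableFam T (univ : Set X) (Fin n))
    (A : Set X) (hA : A.Nonempty) (hAres : ResolvableFam T A ℕ) :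
    ∃ U : TopologicalSpace X, (∀ s, T.IsOpen s → U.IsOpen s) ∧
      ResolvableFam U (univ : Set X) (Fin n) ∧
      ¬ ResolvableFam U (univ : Set X) (Fin (n + 1)) := by
  classical
  obtain ⟨E, _, hEne, hEcl, hEdisj⟩ := hres
  have hXne : Nonempty X := ⟨hA.choose⟩
  -- the poset of expansions of `T` in which every `E i` is dense
  set P : Set (TopologicalSpace X) :=
    {U | U ≤ T ∧ ∀ i : Fin n, DenseIn U (E i)} with hP
  have hTP : T ∈ P := ⟨le_rfl, fun i => denseIn_iff_closure.mpr (hEcl i)⟩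
  -- Zorn's lemma: a minimal (i.e. finest) such expansion exists
  have hchainUB : ∀ c ⊆ {U : (TopologicalSpace X)ᵒᵈ | OrderDual.ofDual U ∈ P},
      IsChain (· ≤ ·) c → ∀ y ∈ c,
      ∃ ub ∈ {U : (TopologicalSpace X)ᵒᵈ | OrderDual.ofDual U ∈ P}, ∀ z ∈ c, z ≤ ub := by
    intro c hc hchain y hy
    set B : Set (Set X) := {s | ∃ t ∈ c, (OrderDual.ofDual t).IsOpen s} with hB
    set L : TopologicalSpace X := TopologicalSpace.generateFrom B with hL
    have hBu : (univ : Set X) ∈ B :=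
      ⟨y, hy, (OrderDual.ofDual y).isOpen_univ⟩
    have hBi : ∀ a ∈ B, ∀ b ∈ B, a ∩ b ∈ B := by
      rintro a ⟨t1, ht1, ha⟩ b ⟨t2, ht2, hb⟩
      rcases eq_or_ne t1 t2 with rfl | hne
      · exact ⟨t1, ht1, (OrderDual.ofDual t1).isOpen_inter _ _ ha hb⟩
      · rcases hchain ht1 ht2 hne with h | h
        · exact ⟨t2, ht2, (OrderDual.ofDual t2).isOpen_inter _ _ (h _ ha) hb⟩
        · exact ⟨t1, ht1, (OrderDual.ofDual t1).isOpen_inter _ _ ha (h _ hb)⟩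
    have hLle : ∀ t ∈ c, L ≤ OrderDual.ofDual t := by
      intro t ht
      intro s hs
      exact TopologicalSpace.GenerateOpen.basic s ⟨t, ht, hs⟩
    refine ⟨OrderDual.toDual L, ⟨?_, ?_⟩, fun z hz => hLle z hz⟩
    · exact (hLle y hy).trans (hc hy).1
    · intro i W hW hne
      obtain ⟨x, hx⟩ := hne
      obtain ⟨b, hbB, hxb, hbW⟩ := genOpen_basis hBu hBi W hW x hx
      obtain ⟨t, htc, hbt⟩ := hbB
      exact ((hc htc).2 i b hbt ⟨x, hxb⟩).imp fun z hz => ⟨hz.1, hbW hz.2⟩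
  have hzorn : ∃ m, m ∈ P ∧ ∀ z ∈ P, z ≤ m → z = m := by
    obtain ⟨m, _, hmem, hmax⟩ :=
      zorn_le_nonempty₀ (α := (TopologicalSpace X)ᵒᵈ)
        {U : (TopologicalSpace X)ᵒᵈ | OrderDual.ofDual U ∈ P} hchainUB
        (OrderDual.toDual T) hTP
    exact ⟨OrderDual.ofDual m, hmem, fun z hz hzm => le_antisymm hzm (hmax hz hzm)⟩
  obtain ⟨m, hm, hmin⟩ := hzorn
  -- the key "local killing" property coming from minimality
  have kill : ∀ V : Set X, ¬ m.IsOpen V →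
      ∃ (i : Fin n) (O : Set X), m.IsOpen O ∧ (O ∩ V).Nonempty ∧ E i ∩ (O ∩ V) = ∅ := by
    intro V hV
    by_contra hcon
    push_neg at hcon
    set B : Set (Set X) := {s | m.IsOpen s} ∪ {s | ∃ O, m.IsOpen O ∧ s = O ∩ V} with hB
    have hBu : (univ : Set X) ∈ B := Or.inl m.isOpen_univ
    have hBi : ∀ a ∈ B, ∀ b ∈ B, a ∩ b ∈ B := by
      rintro a (ha | ⟨O1, hO1, rfl⟩) b (hb | ⟨O2, hO2, rfl⟩)
      · exact Or.inl (m.isOpen_inter _ _ ha hb)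
      · exact Or.inr ⟨a ∩ O2, m.isOpen_inter _ _ ha hO2, by
          ext x; simp only [Set.mem_inter_iff]; tauto⟩
      · exact Or.inr ⟨O1 ∩ b, m.isOpen_inter _ _ hO1 hb, by
          ext x; simp only [Set.mem_inter_iff]; tauto⟩
      · exact Or.inr ⟨O1 ∩ O2, m.isOpen_inter _ _ hO1 hO2, by
          ext x; simp only [Set.mem_inter_iff]; tauto⟩
    set U' : TopologicalSpace X := TopologicalSpace.generateFrom B with hU'
    have hU'le : U' ≤ m := fun s hs => TopologicalSpace.GenerateOpen.basic s (Or.inl hs)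
    have hU'P : U' ∈ P := by
      refine ⟨hU'le.trans hm.1, fun i W hW hne => ?_⟩
      obtain ⟨x, hx⟩ := hne
      obtain ⟨b, hbB, hxb, hbW⟩ := genOpen_basis hBu hBi W hW x hx
      rcases hbB with hb | ⟨O, hO, rfl⟩
      · exact (hm.2 i b hb ⟨x, hxb⟩).imp fun z hz => ⟨hz.1, hbW hz.2⟩
      · exact (hcon i O hO ⟨x, hxb⟩).imp fun z hz => ⟨hz.1, hbW hz.2⟩
    have heq : U' = m := hmin U' hU'P hU'le
    have hVopen : m.IsOpen V := by
      rw [← heq]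
      have h1 : U'.IsOpen (univ ∩ V) :=
        TopologicalSpace.GenerateOpen.basic _ (Or.inr ⟨univ, m.isOpen_univ, rfl⟩)
      simpa using h1
    exact hV hVopen
  refine ⟨m, fun s hs => hm.1 s hs, ⟨E, fun i => subset_univ _, hEne,
    fun i => denseIn_iff_closure.mp (hm.2 i), hEdisj⟩, ?_⟩
  -- now suppose `(X, m)` were `(n+1)`-resolvable
  rintro ⟨D, -, hDne, hDcl, hDdisj⟩
  have hDdense : ∀ j, DenseIn m (D j) := fun j => denseIn_iff_closure.mpr (hDcl j)
  -- the shrinking step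
  have step : ∀ (j : Fin (n + 1)) (O : Set X), ∃ (O' : Set X) (i : Fin n),
      m.IsOpen O → O.Nonempty →
        (m.IsOpen O' ∧ O'.Nonempty ∧ O' ⊆ O ∧ E i ∩ O' ⊆ D j) := by
    intro j O
    by_cases hO : m.IsOpen O ∧ O.Nonempty
    · obtain ⟨hOop, hOne⟩ := hO
      set V : Set X := (O ∩ D j)ᶜ with hVdef
      have hVnot : ¬ m.IsOpen V := by
        intro hVop
        have hOV : m.IsOpen (O ∩ V) := m.isOpen_inter _ _ hOop hVop
        -- pick another index
        have hj2 : ∃ j₂ : Fin (n + 1), j₂ ≠ j := by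
          rcases eq_or_ne j ⟨0, by omega⟩ with rfl | h
          · exact ⟨⟨1, by omega⟩, fun h => by simpa using congrArg Fin.val h⟩
          · exact ⟨⟨0, by omega⟩, fun h' => h h'.symm⟩
        obtain ⟨j₂, hj₂⟩ := hj2
        obtain ⟨x, hxD2, hxO⟩ := hDdense j₂ O hOop hOne
        have hxV : x ∈ O ∩ V := by
          refine ⟨hxO, fun hx => ?_⟩
          exact (hDdisj hj₂).le_bot ⟨hxD2, hx.2⟩
        obtain ⟨y, hyD, hyO, hyV⟩ := hDdense j (O ∩ V) hOV ⟨x, hxV⟩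
        exact hyV ⟨hyO, hyD⟩
      obtain ⟨i, O₁, hO₁op, hO₁Vne, hO₁V⟩ := kill V hVnot
      have hO₁ne : O₁.Nonempty := hO₁Vne.mono inter_subset_left
      have hEO₁ : (E i ∩ O₁).Nonempty := hm.2 i O₁ hO₁op hO₁ne
      have hsub : E i ∩ O₁ ⊆ O ∩ D j := by
        intro y hy
        by_contra hyn
        exact absurd hO₁V (Set.nonempty_iff_ne_empty.mp ⟨y, hy.1, hy.2, hyn⟩)
      obtain ⟨x, hx⟩ := hEO₁
      refine ⟨O ∩ O₁, i, fun _ _ => ⟨m.isOpen_inter _ _ hOop hO₁op,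
        ⟨x, (hsub hx).1, hx.2⟩, inter_subset_left, ?_⟩⟩
      rintro y ⟨hyE, hyO, hyO₁⟩
      exact (hsub ⟨hyE, hyO₁⟩).2
    · exact ⟨univ, ⟨0, by omega⟩, fun h1 h2 => absurd ⟨h1, h2⟩ hO⟩
  choose f idx hstep using step
  -- build the decreasing chain of open sets
  set g : ℕ → Set X := fun k =>
    Nat.rec univ (fun k ih => if h : k < n + 1 then f ⟨k, h⟩ ih else ih) k with hgdef
  have hgsucc : ∀ k, g (k + 1) = if h : k < n + 1 then f ⟨k, h⟩ (g k) else g k :=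
    fun k => rfl
  have hg : ∀ k, m.IsOpen (g k) ∧ (g k).Nonempty := by
    intro k
    induction k with
    | zero => exact ⟨m.isOpen_univ, univ_nonempty⟩
    | succ k ih =>
        rw [hgsucc]
        by_cases h : k < n + 1
        · rw [dif_pos h]
          have := hstep ⟨k, h⟩ (g k) ih.1 ih.2
          exact ⟨this.1, this.2.1⟩
        · rw [dif_neg h]; exact ih
  have hgsub : ∀ k, g (k + 1) ⊆ g k := by
    intro k
    rw [hgsucc]
    by_cases h : k < n + 1
    · rw [dif_pos h]
      exact (hstep ⟨k, h⟩ (g k) (hg k).1 (hg k).2).2.2.1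
    · rw [dif_neg h]
  have hgmono : ∀ k l : ℕ, k ≤ l → g l ⊆ g k := by
    intro k l hkl
    induction l with
    | zero =>
        have : k = 0 := by omega
        subst this; exact subset_rfl
    | succ l ih =>
        rcases Nat.lt_or_ge k (l + 1) with h | h
        · exact (hgsub l).trans (ih (by omega))
        · have : k = l + 1 := by omega
          subst this; exact subset_rfl
  -- the chosen indices
  set I : Fin (n + 1) → Fin n := fun j => idx j (g (j : ℕ)) with hI
  have hkey : ∀ j : Fin (n + 1), E (I j) ∩ g ((j : ℕ) + 1) ⊆ D j := by
    intro j
    have h : (j : ℕ) < n + 1 := j.isLt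
    rw [hgsucc, dif_pos h]
    have hj : (⟨(j : ℕ), h⟩ : Fin (n + 1)) = j := by ext; rfl
    rw [hj]
    exact (hstep j (g (j : ℕ)) (hg _).1 (hg _).2).2.2.2
  -- pigeonhole
  have main : ∀ j j' : Fin (n + 1), j < j' → I j = I j' → False := by
    intro j j' hlt hIeq
    have hW := hg ((j' : ℕ) + 1)
    obtain ⟨x, hxE, hxW⟩ := hm.2 (I j) (g ((j' : ℕ) + 1)) hW.1 hW.2
    have hxj' : x ∈ D j' := hkey j' ⟨hIeq ▸ hxE, hxW⟩
    have hxj : x ∈ D j := by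
      refine hkey j ⟨hxE, ?_⟩
      exact hgmono ((j : ℕ) + 1) ((j' : ℕ) + 1) (by omega) hxW
    exact (hDdisj (ne_of_lt hlt)).le_bot ⟨hxj, hxj'⟩
  obtain ⟨j, j', hne, heq⟩ := Fintype.exists_ne_map_eq_of_card_lt I (by simp)
  rcases Ne.lt_or_gt hne with h | h
  · exact main j j' h heq
  · exact main j' j h heq.symm
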